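/- Tolerant n-tuple consequence coincides with LP consequence: for all sets of sentences Γ ∪ {A}, Γ ⊨_{n,t} A if and only if Γ ⊨_l A. -/

import Mathlib

/-- Helper instance so that instance search for the lexicographic order does not get stuck. -/
instance (n : ℕ) : WellFoundedLT (Fin n) := inferInstance

/-- `2^n`: the `n`-fold product of the two-element Boolean algebra `2 = {0,1}` (as `Bool`,
with `false = 0`, `true = 1`), carrying the lexicographic order. -/
abbrev Tup (n : ℕ) := Lex (Fin n → Bool)

/-- The componentwise complement `-⟨x₁,…,xₙ⟩ = ⟨1-x₁,…,1-xₙ⟩` on `2^n`. -/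
def tneg {n : ℕ} (x : Tup n) : Tup n := toLex fun i => !(ofLex x i)

/-- The top value `⟨1,…,1⟩` of `2^n`. -/
def tTop (n : ℕ) : Tup n := toLex fun _ => true

/-- The bottom value `⟨0,…,0⟩` of `2^n`. -/
def tBot (n : ℕ) : Tup n := toLex fun _ => false

/-- The three truth values `f < i < t` (i.e. `0 < 1/2 < 1`). -/
inductive V3 where
  | f | i | t
deriving DecidableEq

instance : Fintype V3 :=
  ⟨{V3.f, V3.i, V3.t}, fun x => by cases x <;> decide⟩

def V3.toFin : V3 → Fin 3
  | .f => 0 | .i => 1 | .t => 2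

instance : LinearOrder V3 := LinearOrder.lift' V3.toFin (by decide)

/-- Three-valued negation: `1 - x`. -/
def V3.negv : V3 → V3
  | .t => .f | .i => .i | .f => .t

instance (n : ℕ) : Fintype (Tup n) := Fintype.ofEquiv _ toLex
instance (n : ℕ) : Nonempty (Tup n) := ⟨tBot n⟩
noncomputable instance (n : ℕ) : CompleteLinearOrder (Tup n) :=
  Fintype.toCompleteLinearOrder _
instance : Nonempty V3 := ⟨V3.t⟩
noncomputable instance : CompleteLinearOrder V3 :=
  Fintype.toCompleteLinearOrderOfNonempty _

/-- Terms of a first-order language: variables and constant symbols. -/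
inductive Term (Const : Type) where
  | var : ℕ → Term Const
  | const : Const → Term Const

/-- First-order formulas over predicate symbols `Pred` (with arities `ar`),
constants `Const`, and the connectives `¬, ∧, ∨, ∀, ∃`. -/
inductive FForm (Pred Const : Type) (ar : Pred → ℕ) where
  | atom : (P : Pred) → (Fin (ar P) → Term Const) → FForm Pred Const ar
  | neg : FForm Pred Const ar → FForm Pred Const ar
  | conj : FForm Pred Const ar → FForm Pred Const ar → FForm Pred Const ar
  | disj : FForm Pred Const ar → FForm Pred Const ar → FForm Pred Const ar
  | all : ℕ → FForm Pred Const ar → FForm Pred Const ar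
  | ex : ℕ → FForm Pred Const ar → FForm Pred Const ar

/-- Evaluation of terms, given interpretations of the constants and an assignment. -/
def Term.evalt {Const D : Type} (cv : Const → D) (σ : ℕ → D) : Term Const → D
  | .var x => σ x
  | .const c => cv c

/-- The Clemens valuation over `2^n`: componentwise complement for `¬`, lexicographic
min/max for `∧`/`∨`, and inf/sup over the domain for the quantifiers. -/
noncomputable def fevalT {Pred Const : Type} {ar : Pred → ℕ} {n : ℕ} {D : Type}
    (cv : Const → D) (pv : (P : Pred) → (Fin (ar P) → D) → Tup n) (σ : ℕ → D) :
    FForm Pred Const ar → Tup n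
  | .atom P ts => pv P fun j => (ts j).evalt cv σ
  | .neg A => tneg (fevalT cv pv σ A)
  | .conj A B => min (fevalT cv pv σ A) (fevalT cv pv σ B)
  | .disj A B => max (fevalT cv pv σ A) (fevalT cv pv σ B)
  | .all x A => ⨅ d : D, fevalT cv pv (Function.update σ x d) A
  | .ex x A => ⨆ d : D, fevalT cv pv (Function.update σ x d) A

/-- The three-valued (strong Kleene / LP) valuation over `{0, 1/2, 1}`: `1 - x` for `¬`,
min/max for `∧`/`∨`, and inf/sup over the domain for the quantifiers. -/
noncomputable def feval3 {Pred Const : Type} {ar : Pred → ℕ} {D : Type}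
    (cv : Const → D) (pv : (P : Pred) → (Fin (ar P) → D) → V3) (σ : ℕ → D) :
    FForm Pred Const ar → V3
  | .atom P ts => pv P fun j => (ts j).evalt cv σ
  | .neg A => (feval3 cv pv σ A).negv
  | .conj A B => min (feval3 cv pv σ A) (feval3 cv pv σ B)
  | .disj A B => max (feval3 cv pv σ A) (feval3 cv pv σ B)
  | .all x A => ⨅ d : D, feval3 cv pv (Function.update σ x d) A
  | .ex x A => ⨆ d : D, feval3 cv pv (Function.update σ x d) A

/-- Strict consequence `Γ ⊨_{n,s} A`: in every Clemens interpretation (with nonempty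
domain) and assignment, if every premise takes the value `⟨1,…,1⟩`, so does `A`. -/
def ConseqS (n : ℕ) (Pred Const : Type) (ar : Pred → ℕ)
    (Γ : Set (FForm Pred Const ar)) (A : FForm Pred Const ar) : Prop :=
  ∀ (D : Type) (_ : Nonempty D) (cv : Const → D)
    (pv : (P : Pred) → (Fin (ar P) → D) → Tup n) (σ : ℕ → D),
    (∀ B ∈ Γ, fevalT cv pv σ B = tTop n) → fevalT cv pv σ A = tTop n

/-- Tolerant consequence `Γ ⊨_{n,t} A`: preservation of values `≠ ⟨0,…,0⟩`. -/
def ConseqT (n : ℕ) (Pred Const : Type) (ar : Pred → ℕ)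
    (Γ : Set (FForm Pred Const ar)) (A : FForm Pred Const ar) : Prop :=
  ∀ (D : Type) (_ : Nonempty D) (cv : Const → D)
    (pv : (P : Pred) → (Fin (ar P) → D) → Tup n) (σ : ℕ → D),
    (∀ B ∈ Γ, fevalT cv pv σ B ≠ tBot n) → fevalT cv pv σ A ≠ tBot n

/-- Strict-tolerant consequence `Γ ⊨_{n,s,t} A`: if all premises take value `⟨1,…,1⟩`,
the conclusion takes a value `≠ ⟨0,…,0⟩`. -/
def ConseqNST (n : ℕ) (Pred Const : Type) (ar : Pred → ℕ)
    (Γ : Set (FForm Pred Const ar)) (A : FForm Pred Const ar) : Prop :=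
  ∀ (D : Type) (_ : Nonempty D) (cv : Const → D)
    (pv : (P : Pred) → (Fin (ar P) → D) → Tup n) (σ : ℕ → D),
    (∀ B ∈ Γ, fevalT cv pv σ B = tTop n) → fevalT cv pv σ A ≠ tBot n

/-- K3 consequence `Γ ⊨_k A`: preservation of the value `1` in all three-valued
(strong Kleene) interpretations. -/
def ConseqK (Pred Const : Type) (ar : Pred → ℕ)
    (Γ : Set (FForm Pred Const ar)) (A : FForm Pred Const ar) : Prop :=
  ∀ (D : Type) (_ : Nonempty D) (cv : Const → D)
    (pv : (P : Pred) → (Fin (ar P) → D) → V3) (σ : ℕ → D),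
    (∀ B ∈ Γ, feval3 cv pv σ B = V3.t) → feval3 cv pv σ A = V3.t

/-- LP consequence `Γ ⊨_l A`: preservation of the designated values `{1, 1/2}`. -/
def ConseqL (Pred Const : Type) (ar : Pred → ℕ)
    (Γ : Set (FForm Pred Const ar)) (A : FForm Pred Const ar) : Prop :=
  ∀ (D : Type) (_ : Nonempty D) (cv : Const → D)
    (pv : (P : Pred) → (Fin (ar P) → D) → V3) (σ : ℕ → D),
    (∀ B ∈ Γ, feval3 cv pv σ B ∈ ({V3.t, V3.i} : Set V3)) →
      feval3 cv pv σ A ∈ ({V3.t, V3.i} : Set V3)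

/-- ST consequence `Γ ⊨_st A`: if all premises take value `1`, the conclusion takes a
value in `{1, 1/2}`. -/
def ConseqST (Pred Const : Type) (ar : Pred → ℕ)
    (Γ : Set (FForm Pred Const ar)) (A : FForm Pred Const ar) : Prop :=
  ∀ (D : Type) (_ : Nonempty D) (cv : Const → D)
    (pv : (P : Pred) → (Fin (ar P) → D) → V3) (σ : ℕ → D),
    (∀ B ∈ Γ, feval3 cv pv σ B = V3.t) → feval3 cv pv σ A ∈ ({V3.t, V3.i} : Set V3)



namespace TolAux

lemma tneg_tneg {n : ℕ} (x : Tup n) : tneg (tneg x) = x := by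
  funext i; simp [tneg]

lemma tneg_tBot {n : ℕ} : tneg (tBot n) = tTop n := by
  funext i; simp [tneg, tBot, tTop]

lemma tneg_tTop {n : ℕ} : tneg (tTop n) = tBot n := by
  funext i; simp [tneg, tBot, tTop]

lemma tBot_le {n : ℕ} (x : Tup n) : tBot n ≤ x := by
  by_contra h
  push_neg at h
  obtain ⟨i, -, hi⟩ := h
  exact absurd hi (by simp [tBot])

lemma le_tTop {n : ℕ} (x : Tup n) : x ≤ tTop n := by
  by_contra h
  push_neg at h
  obtain ⟨i, -, hi⟩ := h
  exact absurd hi (by simp [tTop])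

lemma f_le (v : V3) : V3.f ≤ v := by cases v <;> decide
lemma le_t (v : V3) : v ≤ V3.t := by cases v <;> decide

open Classical in
noncomputable def g {n : ℕ} (x : Tup n) : V3 :=
  if x = tBot n then .f else if x = tTop n then .t else .i

lemma g_mono {n : ℕ} : Monotone (g (n := n)) := by
  intro x y hxy
  rcases eq_or_ne x (tBot n) with hx | hx
  · simp only [g, if_pos hx]; exact f_le _
  have hyB : y ≠ tBot n := fun h => hx (le_antisymm (h ▸ hxy) (tBot_le x))
  rcases eq_or_ne y (tTop n) with hy | hy
  · simp only [g, if_neg hyB, if_pos hy]; exact le_t _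
  have hxT : x ≠ tTop n := fun h => hy (le_antisymm (le_tTop y) (h ▸ hxy))
  simp only [g, if_neg hx, if_neg hxT, if_neg hyB, if_neg hy]
  exact le_refl _

lemma g_tneg {n : ℕ} (hne : tBot n ≠ tTop n) (x : Tup n) :
    g (tneg x) = (g x).negv := by
  rcases eq_or_ne x (tBot n) with h | hB
  · subst h
    rw [tneg_tBot]
    simp only [g, if_pos rfl, if_neg (Ne.symm hne), V3.negv]
    simp
  rcases eq_or_ne x (tTop n) with h | hT
  · subst h
    rw [tneg_tTop]
    simp only [g, if_pos rfl, if_neg hne.symm, V3.negv]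
    simp [hne.symm]
  have hb : tneg x ≠ tBot n := fun h => hT (by rw [← tneg_tneg x, h, tneg_tBot])
  have ht : tneg x ≠ tTop n := fun h => hB (by rw [← tneg_tneg x, h, tneg_tTop])
  simp only [g, if_neg hb, if_neg ht, if_neg hB, if_neg hT, V3.negv]

lemma g_ne_f {n : ℕ} (x : Tup n) : g x ≠ .f ↔ x ≠ tBot n := by
  constructor
  · intro h hx; exact h (by simp [g, hx])
  · intro hx
    simp only [g, if_neg hx]
    split_ifs <;> decide

lemma mem_iff (v : V3) : v ∈ ({V3.t, V3.i} : Set V3) ↔ v ≠ .f := by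
  cases v <;> simp

lemma mono_map_iInf {α β : Type*} [CompleteLinearOrder α] [CompleteLinearOrder β] [Finite α]
    {g : α → β} (hg : Monotone g) {D : Type} [Nonempty D] (f : D → α) :
    g (⨅ d, f d) = ⨅ d, g (f d) := by
  obtain ⟨d0, hd0⟩ : ∃ d0, f d0 = ⨅ d, f d := by
    have hmem : sInf (Set.range f) ∈ Set.range f :=
      Set.Nonempty.csInf_mem (Set.range_nonempty f) (Set.toFinite _)
    rw [sInf_range] at hmem
    exact hmem
  apply le_antisymm
  · exact le_iInf fun d => hg (iInf_le f d)
  · calc ⨅ d, g (f d) ≤ g (f d0) := iInf_le (fun d => g (f d)) d0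
      _ = g (⨅ d, f d) := by rw [hd0]

lemma mono_map_iSup {α β : Type*} [CompleteLinearOrder α] [CompleteLinearOrder β] [Finite α]
    {g : α → β} (hg : Monotone g) {D : Type} [Nonempty D] (f : D → α) :
    g (⨆ d, f d) = ⨆ d, g (f d) := by
  obtain ⟨d0, hd0⟩ : ∃ d0, f d0 = ⨆ d, f d := by
    have hmem : sSup (Set.range f) ∈ Set.range f :=
      Set.Nonempty.csSup_mem (Set.range_nonempty f) (Set.toFinite _)
    rw [sSup_range] at hmem
    exact hmem
  apply le_antisymm
  · calc g (⨆ d, f d) = g (f d0) := by rw [hd0]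
      _ ≤ ⨆ d, g (f d) := le_iSup (fun d => g (f d)) d0
  · exact iSup_le fun d => hg (le_iSup f d)

lemma feval_g {Pred Const : Type} {ar : Pred → ℕ} {n : ℕ} (hne : tBot n ≠ tTop n)
    {D : Type} [Nonempty D]
    (cv : Const → D) (pv : (P : Pred) → (Fin (ar P) → D) → Tup n) (σ : ℕ → D)
    (A : FForm Pred Const ar) :
    feval3 cv (fun P v => g (pv P v)) σ A = g (fevalT cv pv σ A) := by
  induction A generalizing σ with
  | atom P ts => rfl
  | neg A ih => simp [feval3, fevalT, ih, g_tneg hne]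
  | conj A B ihA ihB => simp [feval3, fevalT, ihA, ihB, g_mono.map_min]
  | disj A B ihA ihB => simp [feval3, fevalT, ihA, ihB, g_mono.map_max]
  | all x A ih => simp only [feval3, fevalT, ih, mono_map_iInf g_mono]; exact (@mono_map_iInf (Tup n) V3 Pi.Lex.instCompleteLinearOrderLexForall _ _ _ g_mono D _ _).symm
  | ex x A ih => simp only [feval3, fevalT, ih, mono_map_iSup g_mono]; exact (@mono_map_iSup (Tup n) V3 Pi.Lex.instCompleteLinearOrderLexForall _ _ _ g_mono D _ _).symm

noncomputable def h3 (n : ℕ) : V3 → Tup n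
  | .f => tBot n
  | .t => tTop n
  | .i => toLex fun i => decide (i.val = 0)

lemma g_h3 {n : ℕ} (hn : 2 ≤ n) (v : V3) : g (h3 n v) = v := by
  have h01 : (0 : ℕ) < n := by omega
  have h11 : (1 : ℕ) < n := by omega
  have hne : tBot n ≠ tTop n := fun h =>
    absurd (congrFun h ⟨0, h01⟩) (by simp [tBot, tTop])
  cases v with
  | f => simp [h3, g]
  | t => simp [h3, g, Ne.symm hne]
  | i =>
    have hb : (h3 n .i : Tup n) ≠ tBot n := fun h =>
      absurd (congrFun h ⟨0, h01⟩) (by simp [h3, tBot])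
    have ht : (h3 n .i : Tup n) ≠ tTop n := fun h =>
      absurd (congrFun h ⟨1, h11⟩) (by simp [h3, tTop])
    simp only [h3] at hb ht
    simp only [h3, g, if_neg hb, if_neg ht]
    exact (if_neg hb).trans (if_neg ht)

end TolAux

/-- tolerant `n`-tuple consequence coincides with LP consequence. -/
theorem tolerant_iff_LP (n : ℕ) (hn : 2 ≤ n) (Pred Const : Type) (ar : Pred → ℕ)
    (Γ : Set (FForm Pred Const ar)) (A : FForm Pred Const ar) :
    ConseqT n Pred Const ar Γ A ↔ ConseqL Pred Const ar Γ A := by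
  have hne : tBot n ≠ tTop n := fun h =>
    absurd (congrFun h ⟨0, by omega⟩) (by simp [tBot, tTop])
  constructor
  · intro hT D hD cv pv σ hΓ
    have key : ∀ B, feval3 cv pv σ B = TolAux.g (fevalT cv (fun P v => TolAux.h3 n (pv P v)) σ B) := by
      intro B
      have h := TolAux.feval_g hne cv (fun P v => TolAux.h3 n (pv P v)) σ B
      rwa [show (fun P v => TolAux.g (TolAux.h3 n (pv P v))) = pv from
        funext fun P => funext fun v => TolAux.g_h3 hn _] at h
    have hmain := hT D hD cv (fun P v => TolAux.h3 n (pv P v)) σ (fun B hB =>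
      (TolAux.g_ne_f _).mp (key B ▸ (TolAux.mem_iff _).mp (hΓ B hB)))
    rw [TolAux.mem_iff, key A]
    exact (TolAux.g_ne_f _).mpr hmain
  · intro hL D hD cv pv σ hΓ
    have key : ∀ B, feval3 cv (fun P v => TolAux.g (pv P v)) σ B = TolAux.g (fevalT cv pv σ B) :=
      fun B => TolAux.feval_g hne cv pv σ B
    have hmain := hL D hD cv (fun P v => TolAux.g (pv P v)) σ (fun B hB => by
      rw [TolAux.mem_iff, key B]
      exact (TolAux.g_ne_f _).mpr (hΓ B hB))
    rw [TolAux.mem_iff, key A] at hmain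
    exact (TolAux.g_ne_f _).mp hmain
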